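/- Let V_R and V_B be finite disjoint sets of vectors in {0,1}^d and let c ∈ {0,1}^d satisfy δ(b,c) < δ(r,c) for every b ∈ V_B and r ∈ V_R. Let B = ⋃_{b ∈ V_B} O(b) and let c' ∈ {0,1}^d be the vector with O(c') = O(c) ∩ B. Then c' also satisfies δ(b,c') < δ(r,c') for every b ∈ V_B and r ∈ V_R, and moreover con(c') ≤ con(c). -/
import Mathlib


/-- The set of coordinates where a binary vector equals `1` (`true`). -/
def ones {d : ℕ} (v : Fin d → Bool) : Finset (Fin d) :=
  Finset.univ.filter (fun i => v i = true)

/-- Restricting a separating center to the union of the supports of the blue vectors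
keeps it separating, and does not increase its conciseness. -/
theorem center_restrict_to_blue_support (d : ℕ) (VR VB : Finset (Fin d → Bool))
    (hdisj : Disjoint VR VB) (c c' : Fin d → Bool)
    (hsep : ∀ b ∈ VB, ∀ r ∈ VR, hammingDist b c < hammingDist r c)
    (hc' : ∀ i, c' i = true ↔ (c i = true ∧ ∃ b ∈ VB, b i = true)) :
    (∀ b ∈ VB, ∀ r ∈ VR, hammingDist b c' < hammingDist r c') ∧
      (ones c').card ≤ (ones c).card := by
  classical
  -- the set of flipped coordinates
  set S : Finset (Fin d) :=
    Finset.univ.filter (fun i => c i = true ∧ ¬ ∃ b ∈ VB, b i = true) with hS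
  have hmemS : ∀ i, i ∈ S ↔ (c i = true ∧ ¬ ∃ b ∈ VB, b i = true) := by
    intro i; simp [hS]
  have hc'eq : ∀ i, i ∉ S → c' i = c i := by
    intro i hi
    rw [hmemS] at hi
    by_cases hci : c i = true
    · have : ∃ b ∈ VB, b i = true := by
        by_contra h; exact hi ⟨hci, h⟩
      rw [hci]; exact (hc' i).mpr ⟨hci, this⟩
    · simp only [Bool.not_eq_true] at hci
      rw [hci]
      by_contra h
      simp only [Bool.not_eq_false] at h
      have := ((hc' i).mp h).1
      rw [hci] at this; exact Bool.false_ne_true this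
  have hc'S : ∀ i, i ∈ S → c' i = false ∧ c i = true := by
    intro i hi
    rw [hmemS] at hi
    refine ⟨?_, hi.1⟩
    by_contra h
    simp only [Bool.not_eq_false] at h
    exact hi.2 ((hc' i).mp h).2
  -- distance between c and c' equals S.card
  have hcc' : hammingDist c c' = S.card := by
    unfold hammingDist
    congr 1
    ext i
    simp only [Finset.mem_filter, Finset.mem_univ, true_and]
    constructor
    · intro h
      by_contra hi
      exact h (hc'eq i hi).symm
    · intro hi
      obtain ⟨h1, h2⟩ := hc'S i hi
      rw [h1, h2]; simp
  -- for blue vectors: δ(b,c) = δ(b,c') + |S|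
  have hblue : ∀ b ∈ VB, hammingDist b c = hammingDist b c' + S.card := by
    intro b hb
    have hbS : ∀ i ∈ S, b i = false := by
      intro i hi
      rw [hmemS] at hi
      by_contra h
      simp only [Bool.not_eq_false] at h
      exact hi.2 ⟨b, hb, h⟩
    unfold hammingDist
    have key : (Finset.univ.filter fun i => b i ≠ c i)
        = (Finset.univ.filter fun i => b i ≠ c' i) ∪ S := by
      ext i
      simp only [Finset.mem_union, Finset.mem_filter, Finset.mem_univ, true_and]
      by_cases hi : i ∈ S
      · obtain ⟨h1, h2⟩ := hc'S i hi
        simp [h2, hbS i hi, hi]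
      · rw [hc'eq i hi]
        simp [hi]
    have hdisj2 : Disjoint (Finset.univ.filter fun i => b i ≠ c' i) S := by
      rw [Finset.disjoint_left]
      intro i hi hiS
      obtain ⟨h1, _⟩ := hc'S i hiS
      simp only [Finset.mem_filter, Finset.mem_univ, true_and] at hi
      rw [h1, hbS i hiS] at hi
      exact hi rfl
    rw [key, Finset.card_union_of_disjoint hdisj2]
  constructor
  · intro b hb r hr
    have h1 : hammingDist b c' + S.card = hammingDist b c := (hblue b hb).symm
    have h2 : hammingDist r c ≤ hammingDist r c' + S.card := by
      calc hammingDist r c ≤ hammingDist r c' + hammingDist c' c := hammingDist_triangle _ _ _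
        _ = hammingDist r c' + S.card := by rw [hammingDist_comm c' c, hcc']
    have := hsep b hb r hr
    omega
  · apply Finset.card_le_card
    intro i hi
    simp only [ones, Finset.mem_filter, Finset.mem_univ, true_and] at hi ⊢
    exact ((hc' i).mp hi).1
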